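/- Let g be an n-dimensional nilpotent real Lie algebra. Then the Chevalley–Eilenberg differential vanishes on alternating (n−1)-forms: dβ = 0 for every alternating (n−1)-form β on g. In particular, no nonzero alternating n-form on g is Chevalley–Eilenberg exact, so the top cohomology Hⁿ(g) is nonzero. -/

import Mathlib

set_option linter.unusedSectionVars false
set_option maxHeartbeats 1000000

open scoped TensorProduct

noncomputable section

namespace GKTest

variable {g : Type} [LieRing g] [LieAlgebra ℝ g]

/-- Auxiliary reindexing: `skip2 i j m` is the `m`-th element (0-indexed) of
`{0,…,k} \ {i,j}` when `i < j`. -/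
def skip2 (i j m : ℕ) : ℕ := if m < i then m else if m + 1 < j then m + 1 else m + 2

lemma skip2_le (i j m : ℕ) : skip2 i j m ≤ m + 2 := by
  unfold skip2; split_ifs <;> omega

/-- The argument list `(⁅X i, X j⁆, X₀, …, X̂ᵢ, …, X̂ⱼ, …, X_k)` used in the
Chevalley–Eilenberg formula. -/
def ceArg {k : ℕ} (X : Fin (k + 1) → g) (i j : Fin (k + 1)) : Fin k → g :=
  fun l =>
    if h : (l : ℕ) = 0 then ⁅X i, X j⁆
    else X ⟨skip2 (i : ℕ) (j : ℕ) ((l : ℕ) - 1), by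
      have h1 := skip2_le (i : ℕ) (j : ℕ) ((l : ℕ) - 1)
      have h2 := l.isLt
      omega⟩

/-- The Chevalley–Eilenberg differential of an alternating `k`-form, as a raw function:
`dα(X₀,…,X_k) = ∑_{i<j} (−1)^{i+j} α(⁅X_i,X_j⁆, X₀,…,X̂ᵢ,…,X̂ⱼ,…,X_k)`. -/
def ceD {k : ℕ} (α : g [⋀^Fin k]→ₗ[ℝ] ℝ) (X : Fin (k + 1) → g) : ℝ :=
  ∑ i : Fin (k + 1), ∑ j : Fin (k + 1),
    if (i : ℕ) < (j : ℕ) then (-1 : ℝ) ^ ((i : ℕ) + (j : ℕ)) * α (ceArg X i j) else 0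

end GKTest

namespace GKTest

/-- `ω ∈ Λ²S`: the 2-form `ω` is a finite sum of wedges of 1-forms belonging to `S`. -/
def inLambdaTwo {g : Type} [LieRing g] [LieAlgebra ℝ g]
    (S : Set (Module.Dual ℝ g)) (ω : g → g → ℝ) : Prop :=
  ∃ (m : ℕ) (a b : Fin m → Module.Dual ℝ g),
    (∀ l, a l ∈ S) ∧ (∀ l, b l ∈ S) ∧
    ∀ X Y, ω X Y = ∑ l, (a l X * b l Y - a l Y * b l X)

/-- The filtration of `g*` given by `g*₀ = {0}`, `g*ᵢ₊₁ = {v : dv ∈ Λ² g*ᵢ}`;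
in particular `g*₁ = ker d`. Here `dv` is the 2-form `(X,Y) ↦ −v(⁅X,Y⁆)`. -/
def ceFilt (g : Type) [LieRing g] [LieAlgebra ℝ g] : ℕ → Set (Module.Dual ℝ g)
  | 0 => {0}
  | (i + 1) => {v | inLambdaTwo (ceFilt g i) fun X Y => -(v ⁅X, Y⁆)}

end GKTest

namespace GKTest

variable {g : Type} [LieRing g] [LieAlgebra ℝ g]

/-! ### auxiliary index arithmetic -/

def unskip (i j m : ℕ) : ℕ := if m < i then m else if m < j then m - 1 else m - 2

lemma skip2_ne_left {i j : ℕ} (hij : i < j) (m : ℕ) : skip2 i j m ≠ i := by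
  unfold skip2; split_ifs <;> omega

lemma skip2_ne_right {i j : ℕ} (hij : i < j) (m : ℕ) : skip2 i j m ≠ j := by
  unfold skip2; split_ifs <;> omega

lemma skip2_unskip {i j m : ℕ} (hij : i < j) (hmi : m ≠ i) (hmj : m ≠ j) :
    skip2 i j (unskip i j m) = m := by
  unfold skip2 unskip; split_ifs <;> omega

lemma unskip_skip2 {i j : ℕ} (hij : i < j) (a : ℕ) : unskip i j (skip2 i j a) = a := by
  unfold skip2 unskip; split_ifs <;> omega

lemma unskip_lt {k i j m : ℕ} (hij : i < j) (hj : j < k + 1) (hm : m < k + 1)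
    (hmi : m ≠ i) (hmj : m ≠ j) : unskip i j m + 1 < k := by
  unfold unskip; split_ifs <;> omega

/-! ### pointwise description of `ceArg` -/

lemma ceArg_zero {k : ℕ} (X : Fin (k + 1) → g) (i j : Fin (k + 1)) (hk : 0 < k) :
    ceArg X i j ⟨0, hk⟩ = ⁅X i, X j⁆ := dif_pos rfl

lemma ceArg_succ {k : ℕ} (X : Fin (k + 1) → g) (i j : Fin (k + 1)) (l : Fin k)
    (h0 : (l : ℕ) ≠ 0) :
    ceArg X i j l = X ⟨skip2 (i : ℕ) (j : ℕ) ((l : ℕ) - 1), by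
      have h1 := skip2_le (i : ℕ) (j : ℕ) ((l : ℕ) - 1)
      have h2 := l.isLt
      omega⟩ := dif_neg h0

/-! ### behaviour of `ceArg` under updates -/

section Update

variable {k : ℕ} [DecidableEq (Fin (k + 1))] [DecidableEq (Fin k)]

lemma hk_of_lt {i j : Fin (k + 1)} (hij : (i : ℕ) < (j : ℕ)) : 0 < k := by
  have := j.isLt; omega

lemma ceArg_update_fst (X : Fin (k + 1) → g) {i j : Fin (k + 1)} (hij : (i : ℕ) < (j : ℕ))
    (z : g) :
    ceArg (Function.update X i z) i j
      = Function.update (ceArg X i j) ⟨0, hk_of_lt hij⟩ ⁅z, X j⁆ := by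
  have hk : 0 < k := hk_of_lt hij
  have hji : j ≠ i := by intro h; subst h; omega
  funext l
  rcases eq_or_ne ((l : ℕ)) 0 with h0 | h0
  · have hl : l = ⟨0, hk⟩ := Fin.ext h0
    subst hl
    rw [Function.update_self, ceArg_zero _ _ _ hk, Function.update_self,
      Function.update_of_ne hji]
  · rw [Function.update_of_ne (Fin.ne_of_val_ne h0), ceArg_succ _ _ _ _ h0,
      ceArg_succ _ _ _ _ h0, Function.update_of_ne]
    exact Fin.ne_of_val_ne (skip2_ne_left hij _)

lemma ceArg_update_snd (X : Fin (k + 1) → g) {i j : Fin (k + 1)} (hij : (i : ℕ) < (j : ℕ))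
    (z : g) :
    ceArg (Function.update X j z) i j
      = Function.update (ceArg X i j) ⟨0, hk_of_lt hij⟩ ⁅X i, z⁆ := by
  have hk : 0 < k := hk_of_lt hij
  have hij' : i ≠ j := by intro h; subst h; omega
  funext l
  rcases eq_or_ne ((l : ℕ)) 0 with h0 | h0
  · have hl : l = ⟨0, hk⟩ := Fin.ext h0
    subst hl
    rw [Function.update_self, ceArg_zero _ _ _ hk, Function.update_self,
      Function.update_of_ne hij']
  · rw [Function.update_of_ne (Fin.ne_of_val_ne h0), ceArg_succ _ _ _ _ h0,
      ceArg_succ _ _ _ _ h0, Function.update_of_ne]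
    exact Fin.ne_of_val_ne (skip2_ne_right hij _)

lemma ceArg_update_other (X : Fin (k + 1) → g) {i j m : Fin (k + 1)}
    (hij : (i : ℕ) < (j : ℕ)) (hmi : (m : ℕ) ≠ (i : ℕ)) (hmj : (m : ℕ) ≠ (j : ℕ)) (z : g) :
    ceArg (Function.update X m z) i j
      = Function.update (ceArg X i j)
          ⟨unskip (i : ℕ) (j : ℕ) (m : ℕ) + 1, unskip_lt hij j.isLt m.isLt hmi hmj⟩ z := by
  have hk : 0 < k := hk_of_lt hij
  have hmi' : m ≠ i := Fin.ne_of_val_ne hmi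
  have hmj' : m ≠ j := Fin.ne_of_val_ne hmj
  funext l
  rcases eq_or_ne ((l : ℕ)) 0 with h0 | h0
  · have hl : l = ⟨0, hk⟩ := Fin.ext h0
    subst hl
    rw [ceArg_zero _ _ _ hk, Function.update_of_ne hmi'.symm, Function.update_of_ne hmj'.symm,
      Function.update_of_ne (Fin.ne_of_val_ne (by simp)), ceArg_zero _ _ _ hk]
  · rw [ceArg_succ _ _ _ _ h0]
    rcases eq_or_ne (skip2 (i : ℕ) (j : ℕ) ((l : ℕ) - 1)) ((m : ℕ)) with hsm | hsm
    · have hl : (l : ℕ) = unskip (i : ℕ) (j : ℕ) (m : ℕ) + 1 := by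
        have h1 : unskip (i : ℕ) (j : ℕ) (skip2 (i : ℕ) (j : ℕ) ((l : ℕ) - 1)) = (l : ℕ) - 1 :=
          unskip_skip2 hij _
        rw [hsm] at h1
        omega
      rw [show (⟨skip2 (i : ℕ) (j : ℕ) ((l : ℕ) - 1), by
            have h1 := skip2_le (i : ℕ) (j : ℕ) ((l : ℕ) - 1); have h2 := l.isLt; omega⟩ :
          Fin (k + 1)) = m from Fin.ext hsm, Function.update_self,
        show l = (⟨unskip (i : ℕ) (j : ℕ) (m : ℕ) + 1, unskip_lt hij j.isLt m.isLt hmi hmj⟩ :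
          Fin k) from Fin.ext hl, Function.update_self]
    · rw [Function.update_of_ne (Fin.ne_of_val_ne hsm), Function.update_of_ne, ceArg_succ _ _ _ _ h0]
      intro hl
      apply hsm
      have : (l : ℕ) = unskip (i : ℕ) (j : ℕ) (m : ℕ) + 1 := by rw [hl]
      rw [show (l : ℕ) - 1 = unskip (i : ℕ) (j : ℕ) (m : ℕ) by omega]
      exact skip2_unskip hij hmi hmj

end Update

section Linearity

variable {k : ℕ} [DecidableEq (Fin (k + 1))]

lemma ceD_update_add (β : g [⋀^Fin k]→ₗ[ℝ] ℝ) (X : Fin (k + 1) → g) (m : Fin (k + 1))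
    (x y : g) :
    ceD β (Function.update X m (x + y))
      = ceD β (Function.update X m x) + ceD β (Function.update X m y) := by
  unfold ceD
  rw [← Finset.sum_add_distrib]
  refine Finset.sum_congr rfl fun i _ => ?_
  rw [← Finset.sum_add_distrib]
  refine Finset.sum_congr rfl fun j _ => ?_
  by_cases hij : (i : ℕ) < (j : ℕ)
  · rw [if_pos hij, if_pos hij, if_pos hij]
    rcases eq_or_ne m i with rfl | hmi
    · rw [ceArg_update_fst X hij, ceArg_update_fst X hij, ceArg_update_fst X hij, add_lie,
        AlternatingMap.map_update_add, mul_add]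
    · rcases eq_or_ne m j with rfl | hmj
      · rw [ceArg_update_snd X hij, ceArg_update_snd X hij, ceArg_update_snd X hij, lie_add,
          AlternatingMap.map_update_add, mul_add]
      · rw [ceArg_update_other X hij (fun h => hmi (Fin.ext h)) (fun h => hmj (Fin.ext h)),
          ceArg_update_other X hij (fun h => hmi (Fin.ext h)) (fun h => hmj (Fin.ext h)),
          ceArg_update_other X hij (fun h => hmi (Fin.ext h)) (fun h => hmj (Fin.ext h)),
          AlternatingMap.map_update_add, mul_add]
  · rw [if_neg hij, if_neg hij, if_neg hij, add_zero]

lemma ceD_update_smul (β : g [⋀^Fin k]→ₗ[ℝ] ℝ) (X : Fin (k + 1) → g) (m : Fin (k + 1))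
    (c : ℝ) (x : g) :
    ceD β (Function.update X m (c • x)) = c • ceD β (Function.update X m x) := by
  unfold ceD
  rw [Finset.smul_sum]
  refine Finset.sum_congr rfl fun i _ => ?_
  rw [Finset.smul_sum]
  refine Finset.sum_congr rfl fun j _ => ?_
  by_cases hij : (i : ℕ) < (j : ℕ)
  · rw [if_pos hij, if_pos hij]
    rcases eq_or_ne m i with rfl | hmi
    · rw [ceArg_update_fst X hij, ceArg_update_fst X hij, smul_lie,
        AlternatingMap.map_update_smul, smul_eq_mul, smul_eq_mul]; ring
    · rcases eq_or_ne m j with rfl | hmj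
      · rw [ceArg_update_snd X hij, ceArg_update_snd X hij, lie_smul,
          AlternatingMap.map_update_smul, smul_eq_mul, smul_eq_mul]; ring
      · rw [ceArg_update_other X hij (fun h => hmi (Fin.ext h)) (fun h => hmj (Fin.ext h)),
          ceArg_update_other X hij (fun h => hmi (Fin.ext h)) (fun h => hmj (Fin.ext h)),
          AlternatingMap.map_update_smul, smul_eq_mul, smul_eq_mul]; ring
  · rw [if_neg hij, if_neg hij, smul_zero]

end Linearity

lemma neg_one_pow_succ (t : ℕ) : (-1 : ℝ) ^ (t + 1) = -(-1 : ℝ) ^ t := by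
  rw [pow_succ]; ring

lemma ceD_eq_zero_of_adjacent_eq {k : ℕ} (β : g [⋀^Fin k]→ₗ[ℝ] ℝ) (X : Fin (k + 1) → g)
    (a : ℕ) (ha : a + 1 < k + 1) (hXadj : X ⟨a, by omega⟩ = X ⟨a + 1, ha⟩) :
    ceD β X = 0 := by
  classical
  have hk : 0 < k := by omega
  have ha' : a < k + 1 := by omega
  set A : Fin (k + 1) := ⟨a, ha'⟩ with hA
  set B : Fin (k + 1) := ⟨a + 1, ha⟩ with hB
  have vA : (A : ℕ) = a := rfl
  have vB : (B : ℕ) = a + 1 := rfl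
  have hX' : X A = X B := hXadj
  have hXe : ∀ (u v : ℕ) (hu : u < k + 1) (hv : v < k + 1),
      (u = v ∨ (u = a ∧ v = a + 1) ∨ (u = a + 1 ∧ v = a)) → X ⟨u, hu⟩ = X ⟨v, hv⟩ := by
    rintro u v hu hv (rfl | ⟨rfl, rfl⟩ | ⟨rfl, rfl⟩)
    · rfl
    · exact hX'
    · exact hX'.symm
  -- terms where neither index touches {a, a+1} vanish individually
  have hdup : ∀ (i j : Fin (k + 1)), (i : ℕ) < (j : ℕ) → (i : ℕ) ≠ a → (i : ℕ) ≠ a + 1 →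
      (j : ℕ) ≠ a → (j : ℕ) ≠ a + 1 → β (ceArg X i j) = 0 := by
    intro i j hij hi1 hi2 hj1 hj2
    have h1 : unskip (i : ℕ) (j : ℕ) a + 1 < k :=
      unskip_lt hij j.isLt (by omega) (Ne.symm hi1) (Ne.symm hj1)
    have h2 : unskip (i : ℕ) (j : ℕ) (a + 1) + 1 < k :=
      unskip_lt hij j.isLt (by omega) (Ne.symm hi2) (Ne.symm hj2)
    have hval1 : ceArg X i j ⟨unskip (i : ℕ) (j : ℕ) a + 1, h1⟩ = X A := by
      rw [ceArg_succ _ _ _ _ (Nat.succ_ne_zero _)]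
      congr 1
      apply Fin.ext
      show skip2 (i : ℕ) (j : ℕ) (unskip (i : ℕ) (j : ℕ) a + 1 - 1) = a
      rw [Nat.add_sub_cancel]
      exact skip2_unskip hij (Ne.symm hi1) (Ne.symm hj1)
    have hval2 : ceArg X i j ⟨unskip (i : ℕ) (j : ℕ) (a + 1) + 1, h2⟩ = X B := by
      rw [ceArg_succ _ _ _ _ (Nat.succ_ne_zero _)]
      congr 1
      apply Fin.ext
      show skip2 (i : ℕ) (j : ℕ) (unskip (i : ℕ) (j : ℕ) (a + 1) + 1 - 1) = a + 1
      rw [Nat.add_sub_cancel]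
      exact skip2_unskip hij (Ne.symm hi2) (Ne.symm hj2)
    refine β.map_eq_zero_of_eq _ (hval1.trans (hX'.trans hval2.symm)) ?_
    intro h
    have hvv := congrArg Fin.val h
    have h3 : unskip (i : ℕ) (j : ℕ) a = unskip (i : ℕ) (j : ℕ) (a + 1) := by
      have : (⟨unskip (i : ℕ) (j : ℕ) a + 1, h1⟩ : Fin k).val
          = (⟨unskip (i : ℕ) (j : ℕ) (a + 1) + 1, h2⟩ : Fin k).val := hvv
      simpa using this
    have h4 : skip2 (i : ℕ) (j : ℕ) (unskip (i : ℕ) (j : ℕ) a)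
        = skip2 (i : ℕ) (j : ℕ) (unskip (i : ℕ) (j : ℕ) (a + 1)) := by rw [h3]
    rw [skip2_unskip hij (Ne.symm hi1) (Ne.symm hj1),
      skip2_unskip hij (Ne.symm hi2) (Ne.symm hj2)] at h4
    omega
  -- the two ceArg equalities used for cancelling pairs
  have hargL : ∀ j : Fin (k + 1), a + 1 < (j : ℕ) → ceArg X A j = ceArg X B j := by
    intro j hj
    funext l
    rcases eq_or_ne ((l : ℕ)) 0 with h0 | h0
    · have hl : l = ⟨0, hk⟩ := Fin.ext h0
      subst hl
      rw [ceArg_zero _ _ _ hk, ceArg_zero _ _ _ hk, hX']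
    · rw [ceArg_succ _ _ _ _ h0, ceArg_succ _ _ _ _ h0]
      apply hXe
      simp only [vA, vB]
      unfold skip2
      split_ifs <;> omega
  have hargR : ∀ i : Fin (k + 1), (i : ℕ) < a → ceArg X i A = ceArg X i B := by
    intro i hi
    funext l
    rcases eq_or_ne ((l : ℕ)) 0 with h0 | h0
    · have hl : l = ⟨0, hk⟩ := Fin.ext h0
      subst hl
      rw [ceArg_zero _ _ _ hk, ceArg_zero _ _ _ hk, hX']
    · rw [ceArg_succ _ _ _ _ h0, ceArg_succ _ _ _ _ h0]
      apply hXe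
      simp only [vA, vB]
      unfold skip2
      split_ifs <;> omega
  have hsum : ceD β X = ∑ p ∈ (Finset.univ ×ˢ Finset.univ : Finset (Fin (k + 1) × Fin (k + 1))),
      (if ((p.1 : ℕ) < (p.2 : ℕ)) then
        (-1 : ℝ) ^ ((p.1 : ℕ) + (p.2 : ℕ)) * β (ceArg X p.1 p.2) else 0) := by
    rw [Finset.sum_product]; rfl
  rw [hsum]
  refine Finset.sum_ninvolution (fun p => (Equiv.swap A B p.1, Equiv.swap A B p.2))
    ?_ ?_ (fun p => Finset.mem_univ _) ?_
  · -- pairs cancel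
    rintro ⟨i, j⟩
    dsimp only
    rcases eq_or_ne i A with rfl | hiA
    · rw [Equiv.swap_apply_left]
      rcases eq_or_ne j A with rfl | hjA
      · rw [Equiv.swap_apply_left]
        simp only [vA, vB]
        rw [if_neg (by omega), if_neg (by omega), add_zero]
      rcases eq_or_ne j B with rfl | hjB
      · -- (A, B) and (B, A)
        rw [Equiv.swap_apply_right]
        have hbr : ceArg X A B ⟨0, hk⟩ = 0 := by
          rw [ceArg_zero _ _ _ hk, hX', lie_self]
        rw [AlternatingMap.map_coord_zero β _ hbr]
        simp only [vA, vB]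
        rw [if_pos (by omega), if_neg (by omega), mul_zero, add_zero]
      · rw [Equiv.swap_apply_of_ne_of_ne hjA hjB]
        have hja : (j : ℕ) ≠ a := fun h => hjA (Fin.ext h)
        have hjb : (j : ℕ) ≠ a + 1 := fun h => hjB (Fin.ext h)
        by_cases hj : a + 1 < (j : ℕ)
        · rw [hargL j hj]
          simp only [vA, vB]
          rw [if_pos (by omega), if_pos (by omega),
            show a + 1 + (j : ℕ) = (a + (j : ℕ)) + 1 by omega, neg_one_pow_succ]
          ring
        · simp only [vA, vB]
          rw [if_neg (by omega), if_neg (by omega), add_zero]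
    rcases eq_or_ne i B with rfl | hiB
    · rw [Equiv.swap_apply_right]
      rcases eq_or_ne j A with rfl | hjA
      · -- (B, A) and (A, B)
        rw [Equiv.swap_apply_left]
        have hbr : ceArg X A B ⟨0, hk⟩ = 0 := by
          rw [ceArg_zero _ _ _ hk, hX', lie_self]
        rw [AlternatingMap.map_coord_zero β _ hbr]
        simp only [vA, vB]
        rw [if_neg (by omega), if_pos (by omega), mul_zero, add_zero]
      rcases eq_or_ne j B with rfl | hjB
      · rw [Equiv.swap_apply_right]
        simp only [vA, vB]
        rw [if_neg (by omega), if_neg (by omega), add_zero]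
      · rw [Equiv.swap_apply_of_ne_of_ne hjA hjB]
        have hja : (j : ℕ) ≠ a := fun h => hjA (Fin.ext h)
        have hjb : (j : ℕ) ≠ a + 1 := fun h => hjB (Fin.ext h)
        by_cases hj : a + 1 < (j : ℕ)
        · rw [hargL j hj]
          simp only [vA, vB]
          rw [if_pos (by omega), if_pos (by omega),
            show a + 1 + (j : ℕ) = (a + (j : ℕ)) + 1 by omega, neg_one_pow_succ]
          ring
        · simp only [vA, vB]
          rw [if_neg (by omega), if_neg (by omega), add_zero]
    · rw [Equiv.swap_apply_of_ne_of_ne hiA hiB]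
      have hia : (i : ℕ) ≠ a := fun h => hiA (Fin.ext h)
      have hib : (i : ℕ) ≠ a + 1 := fun h => hiB (Fin.ext h)
      rcases eq_or_ne j A with rfl | hjA
      · rw [Equiv.swap_apply_left]
        by_cases hi : (i : ℕ) < a
        · rw [hargR i hi]
          simp only [vA, vB]
          rw [if_pos (by omega), if_pos (by omega),
            show (i : ℕ) + (a + 1) = ((i : ℕ) + a) + 1 by omega, neg_one_pow_succ]
          ring
        · simp only [vA, vB]
          rw [if_neg (by omega), if_neg (by omega), add_zero]
      rcases eq_or_ne j B with rfl | hjB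
      · rw [Equiv.swap_apply_right]
        by_cases hi : (i : ℕ) < a
        · rw [hargR i hi]
          simp only [vA, vB]
          rw [if_pos (by omega), if_pos (by omega),
            show (i : ℕ) + (a + 1) = ((i : ℕ) + a) + 1 by omega, neg_one_pow_succ]
          ring
        · simp only [vA, vB]
          rw [if_neg (by omega), if_neg (by omega), add_zero]
      · rw [Equiv.swap_apply_of_ne_of_ne hjA hjB]
        have hja : (j : ℕ) ≠ a := fun h => hjA (Fin.ext h)
        have hjb : (j : ℕ) ≠ a + 1 := fun h => hjB (Fin.ext h)
        by_cases hij : (i : ℕ) < (j : ℕ)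
        · rw [if_pos hij, hdup i j hij hia hib hja hjb, mul_zero, add_zero]
        · rw [if_neg hij, add_zero]
  · -- nonzero terms are not fixed points
    rintro ⟨i, j⟩ hF hgp
    have h1 : Equiv.swap A B i = i := congrArg Prod.fst hgp
    have h2 : Equiv.swap A B j = j := congrArg Prod.snd hgp
    have hiA : i ≠ A := by
      rintro rfl
      rw [Equiv.swap_apply_left] at h1
      have := congrArg Fin.val h1
      simp only [vA, vB] at this
      omega
    have hiB : i ≠ B := by
      rintro rfl
      rw [Equiv.swap_apply_right] at h1
      have := congrArg Fin.val h1
      simp only [vA, vB] at this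
      omega
    have hjA : j ≠ A := by
      rintro rfl
      rw [Equiv.swap_apply_left] at h2
      have := congrArg Fin.val h2
      simp only [vA, vB] at this
      omega
    have hjB : j ≠ B := by
      rintro rfl
      rw [Equiv.swap_apply_right] at h2
      have := congrArg Fin.val h2
      simp only [vA, vB] at this
      omega
    apply hF
    dsimp only
    by_cases hij : (i : ℕ) < (j : ℕ)
    · rw [if_pos hij, hdup i j hij (fun h => hiA (Fin.ext h)) (fun h => hiB (Fin.ext h))
        (fun h => hjA (Fin.ext h)) (fun h => hjB (Fin.ext h)), mul_zero]
    · rw [if_neg hij]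
  · -- involution
    intro p
    simp [Equiv.swap_apply_self]

lemma ceD_eq_zero_of_adjacent_eq' {k : ℕ} (β : g [⋀^Fin k]→ₗ[ℝ] ℝ) (X : Fin (k + 1) → g)
    (A B : Fin (k + 1)) (hAB : (B : ℕ) = (A : ℕ) + 1) (h : X A = X B) : ceD β X = 0 := by
  have ha : (A : ℕ) + 1 < k + 1 := by rw [← hAB]; exact B.isLt
  apply ceD_eq_zero_of_adjacent_eq β X (A : ℕ) ha
  convert h using 2
  exact Fin.ext hAB.symm

lemma ceD_swap_adjacent {k : ℕ} (β : g [⋀^Fin k]→ₗ[ℝ] ℝ) (X : Fin (k + 1) → g)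
    (A B : Fin (k + 1)) (hAB : (B : ℕ) = (A : ℕ) + 1) :
    ceD β (Function.update (Function.update X A (X B)) B (X A)) = -ceD β X := by
  classical
  have hABne : A ≠ B := Fin.ne_of_val_ne (by omega)
  have key : ceD β (Function.update (Function.update X A (X A + X B)) B (X A + X B)) = 0 := by
    apply ceD_eq_zero_of_adjacent_eq' β _ A B hAB
    rw [Function.update_of_ne hABne, Function.update_self, Function.update_self]
  rw [ceD_update_add] at key
  rw [Function.update_comm hABne, Function.update_comm hABne] at key
  rw [ceD_update_add, ceD_update_add] at key
  have hT1 : ceD β (Function.update (Function.update X B (X A)) A (X A)) = 0 := by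
    apply ceD_eq_zero_of_adjacent_eq' β _ A B hAB
    rw [Function.update_self, Function.update_of_ne hABne.symm, Function.update_self]
  have hT4 : ceD β (Function.update X A (X B)) = 0 := by
    apply ceD_eq_zero_of_adjacent_eq' β _ A B hAB
    rw [Function.update_self, Function.update_of_ne hABne.symm]
  rw [hT1, Function.update_eq_self, Function.update_eq_self, hT4] at key
  rw [Function.update_comm hABne]
  linarith [key]

lemma ceD_eq_zero_of_eq {k : ℕ} (β : g [⋀^Fin k]→ₗ[ℝ] ℝ) :
    ∀ (X : Fin (k + 1) → g) (i j : Fin (k + 1)), X i = X j → i ≠ j → ceD β X = 0 := by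
  classical
  suffices H : ∀ (d : ℕ) (X : Fin (k + 1) → g) (i j : Fin (k + 1)),
      (j : ℕ) = (i : ℕ) + 1 + d → X i = X j → ceD β X = 0 by
    intro X i j hX hij
    rcases lt_trichotomy ((i : ℕ)) ((j : ℕ)) with h | h | h
    · exact H ((j : ℕ) - (i : ℕ) - 1) X i j (by omega) hX
    · exact absurd (Fin.ext h) hij
    · exact H ((i : ℕ) - (j : ℕ) - 1) X j i (by omega) hX.symm
  intro d
  induction d with
  | zero =>
    intro X i j hj hX
    exact ceD_eq_zero_of_adjacent_eq' β X i j (by omega) hX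
  | succ d ih =>
    intro X i j hj hX
    have hBlt : (j : ℕ) < k + 1 := j.isLt
    set C : Fin (k + 1) := ⟨(j : ℕ) - 1, by omega⟩ with hC
    have vC : (C : ℕ) = (j : ℕ) - 1 := rfl
    have hswap := ceD_swap_adjacent β X C j (by omega)
    have hX'i : (Function.update (Function.update X C (X j)) j (X C)) i = X i := by
      rw [Function.update_of_ne (Fin.ne_of_val_ne (by omega)),
        Function.update_of_ne (Fin.ne_of_val_ne (by omega))]
    have hX'C : (Function.update (Function.update X C (X j)) j (X C)) C = X j := by
      rw [Function.update_of_ne (Fin.ne_of_val_ne (by omega)), Function.update_self]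
    have h0 : ceD β (Function.update (Function.update X C (X j)) j (X C)) = 0 := by
      apply ih _ i C (by omega)
      rw [hX'i, hX'C]
      exact hX
    rw [h0] at hswap
    linarith [hswap]

/-- The Chevalley–Eilenberg differential, packaged as an alternating map. -/
def ceDAlt {k : ℕ} (β : g [⋀^Fin k]→ₗ[ℝ] ℝ) : g [⋀^Fin (k + 1)]→ₗ[ℝ] ℝ where
  toFun := ceD β
  map_update_add' := by
    intro inst X m x y
    have hinst : inst = instDecidableEqFin (k + 1) := Subsingleton.elim _ _
    subst hinst
    exact ceD_update_add β X m x y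
  map_update_smul' := by
    intro inst X m c x
    have hinst : inst = instDecidableEqFin (k + 1) := Subsingleton.elim _ _
    subst hinst
    exact ceD_update_smul β X m c x
  map_eq_zero_of_eq' := fun X i j h hij => ceD_eq_zero_of_eq β X i j h hij

@[simp] lemma ceDAlt_apply {k : ℕ} (β : g [⋀^Fin k]→ₗ[ℝ] ℝ) (X : Fin (k + 1) → g) :
    ceDAlt β X = ceD β X := rfl

section Nilpotent

variable (g)
variable [FiniteDimensional ℝ g] [LieRing.IsNilpotent g]

lemma lie_mem_lcs_succ (x y : g) (j : ℕ) (hy : y ∈ LieModule.lowerCentralSeries ℝ g g j) :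
    ⁅x, y⁆ ∈ LieModule.lowerCentralSeries ℝ g g (j + 1) := by
  rw [LieModule.lowerCentralSeries_succ]
  exact LieSubmodule.lie_mem_lie (LieSubmodule.mem_top x) hy

lemma exists_adapted_set :
    ∃ s : Set g, LinearIndependent ℝ ((↑) : s → g) ∧ Submodule.span ℝ s = ⊤ ∧
      ∀ j : ℕ, ∀ x : g, x ∈ LieModule.lowerCentralSeries ℝ g g j →
        x ∈ Submodule.span ℝ (s ∩ {y : g | y ∈ LieModule.lowerCentralSeries ℝ g g j}) := by
  obtain ⟨r, hr⟩ := LieModule.IsNilpotent.nilpotent ℝ g g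
  have main : ∀ d : ℕ, ∃ s : Set g,
      (s ⊆ {y : g | y ∈ LieModule.lowerCentralSeries ℝ g g (r - d)}) ∧
      LinearIndependent ℝ ((↑) : s → g) ∧
      (∀ x : g, x ∈ LieModule.lowerCentralSeries ℝ g g (r - d) → x ∈ Submodule.span ℝ s) ∧
      ∀ j : ℕ, r - d ≤ j → ∀ x : g, x ∈ LieModule.lowerCentralSeries ℝ g g j →
        x ∈ Submodule.span ℝ (s ∩ {y : g | y ∈ LieModule.lowerCentralSeries ℝ g g j}) := by
    intro d
    induction d with
    | zero =>
      refine ⟨∅, Set.empty_subset _, linearIndependent_empty ℝ g, ?_, ?_⟩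
      · intro x hx
        rw [Nat.sub_zero, hr, LieSubmodule.mem_bot] at hx
        simp [hx]
      · intro j hj x hx
        rw [Nat.sub_zero] at hj
        have hxr : x ∈ LieModule.lowerCentralSeries ℝ g g r :=
          LieModule.antitone_lowerCentralSeries ℝ g g hj hx
        rw [hr, LieSubmodule.mem_bot] at hxr
        simp [hxr]
    | succ d ih =>
      rcases le_or_gt r d with hrd | hrd
      · rw [show r - (d + 1) = r - d by omega]
        exact ih
      · obtain ⟨s', hs'sub, hs'ind, hs'span, hs'filt⟩ := ih
        have hstep : ({y : g | y ∈ LieModule.lowerCentralSeries ℝ g g (r - d)} : Set g)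
            ⊆ {y : g | y ∈ LieModule.lowerCentralSeries ℝ g g (r - (d + 1))} := by
          intro y hy
          exact LieModule.antitone_lowerCentralSeries ℝ g g (by omega) hy
        obtain ⟨b, hbt, hs'b, htspan, hbind⟩ :=
          exists_linearIndepOn_id_extension hs'ind (hs'sub.trans hstep)
        refine ⟨b, hbt, hbind, fun x hx => htspan hx, ?_⟩
        intro j hj x hx
        rcases Nat.lt_or_ge (r - (d + 1)) j with hlt | hge
        · have hj' : r - d ≤ j := by omega
          exact Submodule.span_mono (Set.inter_subset_inter_left _ hs'b)
            (hs'filt j hj' x hx)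
        · have hje : j = r - (d + 1) := by omega
          subst hje
          rw [Set.inter_eq_self_of_subset_left hbt]
          exact htspan hx
  obtain ⟨s, hsub, hind, hspan, hfilt⟩ := main r
  rw [Nat.sub_self] at hspan hfilt
  refine ⟨s, hind, ?_, fun j x hx => hfilt j (Nat.zero_le j) x hx⟩
  rw [eq_top_iff]
  intro x _
  apply hspan
  rw [LieModule.lowerCentralSeries_zero]
  exact LieSubmodule.mem_top x

lemma exists_adapted_basis (n : ℕ) (hn : Module.finrank ℝ g = n) :
    ∃ e : Module.Basis (Fin n) ℝ g, ∀ p q : Fin n,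
      e.repr ⁅e p, e q⁆ p = 0 ∧ e.repr ⁅e p, e q⁆ q = 0 := by
  classical
  obtain ⟨s, hind, hspan, hfilt⟩ := exists_adapted_set g
  let b0 : Module.Basis ↥s ℝ g := Module.Basis.mk hind (by rw [Subtype.range_coe]; exact hspan.ge)
  let e : Module.Basis (Fin n) ℝ g := b0.reindex (b0.indexEquiv (Module.finBasisOfFinrankEq ℝ g hn))
  have hes : ∀ l : Fin n, e l ∈ s := by
    intro l
    show b0.reindex _ l ∈ s
    rw [Module.Basis.reindex_apply, Module.Basis.mk_apply]
    exact Subtype.coe_prop _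
  have hrange : ∀ x ∈ s, ∃ q : Fin n, e q = x := by
    intro x hx
    refine ⟨b0.indexEquiv (Module.finBasisOfFinrankEq ℝ g hn) ⟨x, hx⟩, ?_⟩
    show b0.reindex _ _ = x
    rw [Module.Basis.reindex_apply, Equiv.symm_apply_apply, Module.Basis.mk_apply]
  have hsupp : ∀ (j : ℕ) (x : g),
      x ∈ Submodule.span ℝ (s ∩ {y : g | y ∈ LieModule.lowerCentralSeries ℝ g g j}) →
      ∀ p : Fin n, e p ∉ LieModule.lowerCentralSeries ℝ g g j → e.repr x p = 0 := by
    intro j x hx p hp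
    have hker : Submodule.span ℝ (s ∩ {y : g | y ∈ LieModule.lowerCentralSeries ℝ g g j})
        ≤ LinearMap.ker (e.coord p) := by
      rw [Submodule.span_le]
      rintro y ⟨hys, hyj⟩
      obtain ⟨q, rfl⟩ := hrange y hys
      have hq : q ≠ p := by rintro rfl; exact hp hyj
      simp [LinearMap.mem_ker, Module.Basis.coord_apply, Module.Basis.repr_self,
        Finsupp.single_eq_of_ne' hq]
    have := hker hx
    rwa [LinearMap.mem_ker, Module.Basis.coord_apply] at this
  have hex : ∀ p : Fin n, ∃ j, e p ∉ LieModule.lowerCentralSeries ℝ g g j := by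
    intro p
    obtain ⟨r, hr⟩ := LieModule.IsNilpotent.nilpotent ℝ g g
    refine ⟨r, ?_⟩
    rw [hr, LieSubmodule.mem_bot]
    exact e.ne_zero p
  have key : ∀ p q : Fin n, e.repr ⁅e q, e p⁆ p = 0 := by
    intro p q
    set J := Nat.find (hex p) with hJ
    have hJ1 : e p ∉ LieModule.lowerCentralSeries ℝ g g J := Nat.find_spec (hex p)
    have hJpos : 0 < J := by
      rcases Nat.eq_zero_or_pos J with h0 | h; swap
      · exact h
      exfalso
      apply hJ1
      rw [h0, LieModule.lowerCentralSeries_zero]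
      exact LieSubmodule.mem_top _
    have hJm : e p ∈ LieModule.lowerCentralSeries ℝ g g (J - 1) := by
      by_contra hc
      exact Nat.find_min (hex p) (by omega) hc
    have hbr : ⁅e q, e p⁆ ∈ LieModule.lowerCentralSeries ℝ g g J := by
      have h1 := lie_mem_lcs_succ g (e q) (e p) (J - 1) hJm
      rwa [show J - 1 + 1 = J by omega] at h1
    exact hsupp J _ (hfilt J _ hbr) p hJ1
  refine ⟨e, fun p q => ⟨?_, key q p⟩⟩
  have h1 : ⁅e p, e q⁆ = -⁅e q, e p⁆ := (neg_eq_iff_eq_neg.mp (lie_skew (e q) (e p))).symm ▸ rfl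
  rw [show ⁅e p, e q⁆ = -⁅e q, e p⁆ by rw [← lie_skew], map_neg]
  simp [key p q]

end Nilpotent

lemma ceD_basis_eq_zero {n : ℕ} [FiniteDimensional ℝ g] (e : Module.Basis (Fin (n + 1)) ℝ g)
    (he : ∀ p q : Fin (n + 1), e.repr ⁅e p, e q⁆ p = 0 ∧ e.repr ⁅e p, e q⁆ q = 0)
    (β : g [⋀^Fin n]→ₗ[ℝ] ℝ) (v : Fin (n + 1) → Fin (n + 1)) (hv : Function.Injective v) :
    ceD β (fun l => e (v l)) = 0 := by
  classical
  have hsurj : Function.Surjective v := Finite.injective_iff_surjective.mp hv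
  set X : Fin (n + 1) → g := fun l => e (v l) with hX
  unfold ceD
  refine Finset.sum_eq_zero fun i _ => Finset.sum_eq_zero fun j _ => ?_
  by_cases hij : (i : ℕ) < (j : ℕ)
  · rw [if_pos hij]
    have hk : 0 < n := by have := j.isLt; omega
    have hβ0 : β (ceArg X i j) = 0 := by
      have hbr : ceArg X i j ⟨0, hk⟩ = ⁅X i, X j⁆ := ceArg_zero X i j hk
      calc β (ceArg X i j)
          = β.toMultilinearMap (Function.update (ceArg X i j) ⟨0, hk⟩
              (∑ t : Fin (n + 1), e.repr ⁅X i, X j⁆ t • e t)) := by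
            rw [e.sum_repr, ← hbr, Function.update_eq_self]
            rfl
        _ = ∑ t : Fin (n + 1), e.repr ⁅X i, X j⁆ t •
              β.toMultilinearMap (Function.update (ceArg X i j) ⟨0, hk⟩ (e t)) := by
            rw [MultilinearMap.map_update_sum]
            refine Finset.sum_congr rfl fun t _ => ?_
            rw [MultilinearMap.map_update_smul]
        _ = 0 := by
            refine Finset.sum_eq_zero fun t _ => ?_
            obtain ⟨w, rfl⟩ := hsurj t
            rcases eq_or_ne w i with rfl | hwi
            · have hc : e.repr ⁅X w, X j⁆ (v w) = 0 := (he (v w) (v j)).1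
              rw [hc, zero_smul]
            rcases eq_or_ne w j with rfl | hwj
            · have hc : e.repr ⁅X i, X w⁆ (v w) = 0 := (he (v i) (v w)).2
              rw [hc, zero_smul]
            · have hwi' : (w : ℕ) ≠ (i : ℕ) := fun h => hwi (Fin.ext h)
              have hwj' : (w : ℕ) ≠ (j : ℕ) := fun h => hwj (Fin.ext h)
              have hql : unskip (i : ℕ) (j : ℕ) (w : ℕ) + 1 < n :=
                unskip_lt hij j.isLt w.isLt hwi' hwj'
              have hXw : ∀ (u : ℕ) (hu : u < n + 1), u = (w : ℕ) → X ⟨u, hu⟩ = e (v w) := by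
                rintro u hu rfl
                rfl
              have hval : ceArg X i j ⟨unskip (i : ℕ) (j : ℕ) (w : ℕ) + 1, hql⟩ = e (v w) := by
                rw [ceArg_succ _ _ _ _ (Nat.succ_ne_zero _)]
                exact hXw _ _ (by rw [Nat.add_sub_cancel]; exact skip2_unskip hij hwi' hwj')
              have hz : β (Function.update (ceArg X i j) ⟨0, hk⟩ (e (v w))) = 0 := by
                refine β.map_eq_zero_of_eq _ (i := ⟨0, hk⟩)
                  (j := ⟨unskip (i : ℕ) (j : ℕ) (w : ℕ) + 1, hql⟩) ?_
                  (Fin.ne_of_val_ne (show (0 : ℕ) ≠ unskip (i : ℕ) (j : ℕ) (w : ℕ) + 1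
                    by omega))
                rw [Function.update_self,
                  Function.update_of_ne (Fin.ne_of_val_ne
                    (show unskip (i : ℕ) (j : ℕ) (w : ℕ) + 1 ≠ (0 : ℕ) by omega)), hval]
              have hz' : β.toMultilinearMap
                  (Function.update (ceArg X i j) ⟨0, hk⟩ (e (v w))) = 0 := hz
              rw [hz', smul_zero]
    rw [hβ0, mul_zero]
  · rw [if_neg hij]


/-- On an `n`-dimensional nilpotent real Lie algebra the
Chevalley–Eilenberg differential vanishes on all alternating `(n−1)`-forms; in
particular no nonzero `n`-form is exact, and (for `n ≥ 1`) the top cohomology is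
nonzero. -/
theorem ceD_vanishes_in_degree_top_minus_one
    (g : Type) [LieRing g] [LieAlgebra ℝ g] [FiniteDimensional ℝ g]
    [LieRing.IsNilpotent g]
    (n : ℕ) (hn : Module.finrank ℝ g = n) :
    (∀ (β : g [⋀^Fin (n - 1)]→ₗ[ℝ] ℝ) (X : Fin (n - 1 + 1) → g), ceD β X = 0) ∧
    (∀ γ : g [⋀^Fin (n - 1 + 1)]→ₗ[ℝ] ℝ,
      (∃ β : g [⋀^Fin (n - 1)]→ₗ[ℝ] ℝ, ∀ X : Fin (n - 1 + 1) → g, γ X = ceD β X) →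
      γ = 0) ∧
    (0 < n → ∃ γ : g [⋀^Fin (n - 1 + 1)]→ₗ[ℝ] ℝ, γ ≠ 0 ∧
      (∀ X : Fin (n - 1 + 1 + 1) → g, ceD γ X = 0) ∧
      ∀ β : g [⋀^Fin (n - 1)]→ₗ[ℝ] ℝ, ∃ X : Fin (n - 1 + 1) → g, γ X ≠ ceD β X) := by
  classical
  rcases Nat.eq_zero_or_pos n with rfl | hnpos
  · refine ⟨?_, ?_, fun h => absurd h (by omega)⟩
    · intro β X
      simp [ceD]
    · rintro γ ⟨β, hβ⟩
      ext X
      simp [hβ X, ceD]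
  · obtain ⟨m, rfl⟩ : ∃ m, n = m + 1 := ⟨n - 1, by omega⟩
    obtain ⟨e, he⟩ := exists_adapted_basis g (m + 1) hn
    have hvan : ∀ (β : g [⋀^Fin (m + 1 - 1)]→ₗ[ℝ] ℝ) (X : Fin (m + 1 - 1 + 1) → g),
        ceD β X = 0 := by
      intro β X
      have hzero : ceDAlt (k := m) β = 0 := by
        apply Module.Basis.ext_alternating e
        intro v hv
        rw [AlternatingMap.zero_apply, ceDAlt_apply]
        exact ceD_basis_eq_zero e he β v hv
      have h1 : ceDAlt (k := m) β X = 0 := by rw [hzero]; simp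
      exact h1
    refine ⟨hvan, ?_, ?_⟩
    · rintro γ ⟨β, hβ⟩
      ext X
      rw [hβ X, hvan β X]
      exact (AlternatingMap.zero_apply _).symm
    · intro _
      refine ⟨e.det, ?_, ?_, ?_⟩
      · exact e.det_ne_zero
      · intro X
        have hzero : ceDAlt (k := m + 1) e.det = 0 := by
          apply Module.Basis.ext_alternating e
          intro v hv
          exact absurd (Fintype.card_le_of_injective v hv)
            (by simp only [Fintype.card_fin]; omega)
        have h1 : ceDAlt (k := m + 1) e.det X = 0 := by rw [hzero]; simp
        exact h1
      · intro β
        refine ⟨⇑e, ?_⟩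
        rw [hvan β ⇑e]
        exact (by rw [e.det_self]; exact one_ne_zero : e.det ⇑e ≠ (0 : ℝ))

end GKTest
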